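/- If f is twice continuously differentiable on (0,1) and f''(x)·x² → C⁺ > 0 as x → 0⁺, then f(x)/|log x| → C⁺ as x → 0⁺. -/

import Mathlib

open Set Filter Topology

private lemma antiOn_of_hasDeriv {g g' : ℝ → ℝ} {a b : ℝ}
    (hg : ∀ x ∈ Ioo a b, HasDerivAt g (g' x) x)
    (h : ∀ x ∈ Ioo a b, g' x ≤ 0) : AntitoneOn g (Ioo a b) := by
  apply antitoneOn_of_deriv_nonpos (convex_Ioo a b)
    (fun x hx => (hg x hx).continuousAt.continuousWithinAt)
    (fun x hx => by
      rw [interior_Ioo] at hx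
      exact (hg x hx).differentiableAt.differentiableWithinAt)
  intro x hx
  rw [interior_Ioo] at hx
  rw [(hg x hx).deriv]
  exact h x hx

private lemma monoOn_of_hasDeriv {g g' : ℝ → ℝ} {a b : ℝ}
    (hg : ∀ x ∈ Ioo a b, HasDerivAt g (g' x) x)
    (h : ∀ x ∈ Ioo a b, 0 ≤ g' x) : MonotoneOn g (Ioo a b) := by
  apply monotoneOn_of_deriv_nonneg (convex_Ioo a b)
    (fun x hx => (hg x hx).continuousAt.continuousWithinAt)
    (fun x hx => by
      rw [interior_Ioo] at hx
      exact (hg x hx).differentiableAt.differentiableWithinAt)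
  intro x hx
  rw [interior_Ioo] at hx
  rw [(hg x hx).deriv]
  exact h x hx

private lemma small_over_log (A K : ℝ) :
    Tendsto (fun x => (A + K * x) / (-Real.log x)) (nhdsWithin 0 (Ioo (0:ℝ) 1)) (nhds 0) := by
  have hnum : Tendsto (fun x : ℝ => A + K * x) (nhdsWithin 0 (Ioo (0:ℝ) 1)) (nhds A) := by
    have : Continuous (fun x : ℝ => A + K * x) := by continuity
    have := (this.tendsto 0).mono_left (nhdsWithin_le_nhds (s := Ioo (0:ℝ) 1))
    simpa using this
  have hden : Tendsto (fun x : ℝ => -Real.log x) (nhdsWithin 0 (Ioo (0:ℝ) 1)) atTop := by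
    have h1 : Tendsto Real.log (nhdsWithin 0 (Ioo (0:ℝ) 1)) atBot :=
      Real.tendsto_log_nhdsGT_zero.mono_left
        (nhdsWithin_mono _ (fun x hx => hx.1))
    exact tendsto_neg_atBot_atTop.comp h1
  exact hnum.div_atTop hden

private lemma main_bound (f f' f'' : ℝ → ℝ) (C : ℝ)
    (hderiv1 : ∀ x ∈ Ioo (0:ℝ) 1, HasDerivAt f (f' x) x)
    (hderiv2 : ∀ x ∈ Ioo (0:ℝ) 1, HasDerivAt f' (f'' x) x)
    (hlim : Tendsto (fun x => f'' x * x ^ 2) (nhdsWithin 0 (Ioo (0:ℝ) 1)) (nhds C))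
    {ε : ℝ} (hε : 0 < ε) :
    ∀ᶠ x in nhdsWithin 0 (Ioo (0:ℝ) 1), |f x / |Real.log x| - C| ≤ 2 * ε := by
  -- Step 1: bound f'' on a small interval
  have hev : ∀ᶠ x in nhdsWithin 0 (Ioo (0:ℝ) 1), |f'' x * x ^ 2 - C| < ε := by
    have := Metric.tendsto_nhds.mp hlim ε hε
    simpa [Real.dist_eq] using this
  obtain ⟨δ, hδ, hδ'⟩ := Metric.mem_nhdsWithin_iff.mp hev
  set b : ℝ := min δ 1 with hb_def
  have hb0 : 0 < b := lt_min hδ one_pos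
  have hb1 : b ≤ 1 := min_le_right _ _
  have hsub : Ioo (0:ℝ) b ⊆ Ioo (0:ℝ) 1 := Ioo_subset_Ioo le_rfl hb1
  have hbound : ∀ x ∈ Ioo (0:ℝ) b, C - ε ≤ f'' x * x ^ 2 ∧ f'' x * x ^ 2 ≤ C + ε := by
    intro x hx
    have hx1 : x ∈ Ioo (0:ℝ) 1 := hsub hx
    have hxd : dist x 0 < δ := by
      rw [Real.dist_eq, sub_zero, abs_of_pos hx.1]
      exact lt_of_lt_of_le hx.2 (min_le_left _ _)
    have h := hδ' ⟨Metric.mem_ball.mpr hxd, hx1⟩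
    simp only [mem_setOf_eq] at h
    have := abs_lt.mp h
    constructor <;> linarith [this.1, this.2]
  -- Step 2: monotonicity for f' + c/x
  have hA1 : AntitoneOn (fun t => f' t + (C + ε) * t⁻¹) (Ioo (0:ℝ) b) := by
    apply antiOn_of_hasDeriv (g' := fun t => f'' t + (C + ε) * (-(t ^ 2)⁻¹))
    · intro x hx
      exact ((hderiv2 x (hsub hx)).add ((hasDerivAt_inv (ne_of_gt hx.1)).const_mul (C + ε)))
    · intro x hx
      have hx2 : (0:ℝ) < x ^ 2 := pow_pos hx.1 2
      have h2 := (hbound x hx).2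
      have : f'' x + (C + ε) * (-(x ^ 2)⁻¹) = (f'' x * x ^ 2 - (C + ε)) / x ^ 2 := by
        field_simp
        rw [sub_div, mul_div_cancel_right₀ _ (pow_ne_zero 2 hx.1.ne')]
        ring
      rw [this]
      apply div_nonpos_of_nonpos_of_nonneg (by linarith) hx2.le
  have hM1 : MonotoneOn (fun t => f' t + (C - ε) * t⁻¹) (Ioo (0:ℝ) b) := by
    apply monoOn_of_hasDeriv (g' := fun t => f'' t + (C - ε) * (-(t ^ 2)⁻¹))
    · intro x hx
      exact ((hderiv2 x (hsub hx)).add ((hasDerivAt_inv (ne_of_gt hx.1)).const_mul (C - ε)))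
    · intro x hx
      have hx2 : (0:ℝ) < x ^ 2 := pow_pos hx.1 2
      have h1 := (hbound x hx).1
      have : f'' x + (C - ε) * (-(x ^ 2)⁻¹) = (f'' x * x ^ 2 - (C - ε)) / x ^ 2 := by
        field_simp
        rw [sub_div (f'' x * x ^ 2), mul_div_cancel_right₀ _ (pow_ne_zero 2 hx.1.ne')]
        ring
      rw [this]
      apply div_nonneg (by linarith) hx2.le
  -- Step 3: bounds for f'
  set b1 : ℝ := b / 2 with hb1_def
  have hb1_mem : b1 ∈ Ioo (0:ℝ) b := ⟨half_pos hb0, half_lt_self hb0⟩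
  set K₁ : ℝ := f' b1 + (C + ε) * b1⁻¹ with hK1
  set K₂ : ℝ := f' b1 + (C - ε) * b1⁻¹ with hK2
  have hf'_lb : ∀ x ∈ Ioo (0:ℝ) b1, K₁ - (C + ε) * x⁻¹ ≤ f' x := by
    intro x hx
    have hx' : x ∈ Ioo (0:ℝ) b := ⟨hx.1, hx.2.trans hb1_mem.2⟩
    have := hA1 hx' hb1_mem hx.2.le
    simp only at this
    linarith
  have hf'_ub : ∀ x ∈ Ioo (0:ℝ) b1, f' x ≤ K₂ - (C - ε) * x⁻¹ := by
    intro x hx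
    have hx' : x ∈ Ioo (0:ℝ) b := ⟨hx.1, hx.2.trans hb1_mem.2⟩
    have := hM1 hx' hb1_mem hx.2.le
    simp only at this
    linarith
  have hsub1 : Ioo (0:ℝ) b1 ⊆ Ioo (0:ℝ) 1 :=
    Ioo_subset_Ioo le_rfl (le_trans (le_of_lt hb1_mem.2) hb1)
  -- Step 4: monotonicity for f - K t + c log t
  have hA2 : AntitoneOn (fun t => f t - K₂ * t + (C - ε) * Real.log t) (Ioo (0:ℝ) b1) := by
    apply antiOn_of_hasDeriv (g' := fun t => f' t - K₂ + (C - ε) * t⁻¹)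
    · intro x hx
      exact (((hderiv1 x (hsub1 hx)).sub ((hasDerivAt_id x).const_mul K₂)).add
        ((Real.hasDerivAt_log (ne_of_gt hx.1)).const_mul (C - ε))).congr_deriv (by ring)
    · intro x hx
      have := hf'_ub x hx
      linarith
  have hM2 : MonotoneOn (fun t => f t - K₁ * t + (C + ε) * Real.log t) (Ioo (0:ℝ) b1) := by
    apply monoOn_of_hasDeriv (g' := fun t => f' t - K₁ + (C + ε) * t⁻¹)
    · intro x hx
      exact (((hderiv1 x (hsub1 hx)).sub ((hasDerivAt_id x).const_mul K₁)).add
        ((Real.hasDerivAt_log (ne_of_gt hx.1)).const_mul (C + ε))).congr_deriv (by ring)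
    · intro x hx
      have := hf'_lb x hx
      linarith
  -- Step 5: bounds for f
  set b2 : ℝ := b1 / 2 with hb2_def
  have hb2_mem : b2 ∈ Ioo (0:ℝ) b1 := ⟨half_pos hb1_mem.1, half_lt_self hb1_mem.1⟩
  set A : ℝ := f b2 - K₂ * b2 + (C - ε) * Real.log b2 with hA
  set B : ℝ := f b2 - K₁ * b2 + (C + ε) * Real.log b2 with hB
  have hf_lb : ∀ x ∈ Ioo (0:ℝ) b2, A + K₂ * x - (C - ε) * Real.log x ≤ f x := by
    intro x hx
    have hx' : x ∈ Ioo (0:ℝ) b1 := ⟨hx.1, hx.2.trans hb2_mem.2⟩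
    have := hA2 hx' hb2_mem hx.2.le
    simp only at this
    linarith
  have hf_ub : ∀ x ∈ Ioo (0:ℝ) b2, f x ≤ B + K₁ * x - (C + ε) * Real.log x := by
    intro x hx
    have hx' : x ∈ Ioo (0:ℝ) b1 := ⟨hx.1, hx.2.trans hb2_mem.2⟩
    have := hM2 hx' hb2_mem hx.2.le
    simp only at this
    linarith
  -- Step 6: conclusion
  have hmem : ∀ᶠ x in nhdsWithin 0 (Ioo (0:ℝ) 1), x ∈ Ioo (0:ℝ) b2 := by
    apply mem_nhdsWithin.mpr
    refine ⟨Iio b2, isOpen_Iio, hb2_mem.1, ?_⟩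
    rintro x ⟨hx1, hx2⟩
    exact ⟨hx2.1, hx1⟩
  have hsmallA := Metric.tendsto_nhds.mp (small_over_log A K₂) ε hε
  have hsmallB := Metric.tendsto_nhds.mp (small_over_log B K₁) ε hε
  filter_upwards [hmem, hsmallA, hsmallB, self_mem_nhdsWithin] with x hx hsA hsB hx01
  rw [Real.dist_eq, sub_zero] at hsA hsB
  have hlog_neg : Real.log x < 0 := Real.log_neg hx01.1 hx01.2
  have hL : 0 < -Real.log x := by linarith
  have habs : |Real.log x| = -Real.log x := abs_of_neg hlog_neg
  rw [habs]
  set L : ℝ := -Real.log x with hLdef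
  have hsA' := (abs_lt.mp hsA).1
  have hsA'' := (abs_lt.mp hsA).2
  have hsB' := (abs_lt.mp hsB).1
  have hsB'' := (abs_lt.mp hsB).2
  have hub : f x / L ≤ (B + K₁ * x) / L + (C + ε) := by
    have h1 : f x ≤ (B + K₁ * x) + (C + ε) * L := by
      have := hf_ub x hx
      simp only [hLdef]
      linarith
    calc f x / L ≤ ((B + K₁ * x) + (C + ε) * L) / L := by
          exact div_le_div_of_nonneg_right h1 hL.le
      _ = (B + K₁ * x) / L + (C + ε) := by field_simp
  have hlb : (A + K₂ * x) / L + (C - ε) ≤ f x / L := by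
    have h1 : (A + K₂ * x) + (C - ε) * L ≤ f x := by
      have := hf_lb x hx
      simp only [hLdef]
      linarith
    calc (A + K₂ * x) / L + (C - ε) = ((A + K₂ * x) + (C - ε) * L) / L := by field_simp
      _ ≤ f x / L := div_le_div_of_nonneg_right h1 hL.le
  rw [abs_le]
  constructor
  · have : (A + K₂ * x) / L > -ε := hsA'
    linarith
  · have : (B + K₁ * x) / L < ε := hsB''
    linarith

theorem log_singularity_at_zero (f f' f'' : ℝ → ℝ) (C : ℝ) (hC : 0 < C)
    (hderiv1 : ∀ x ∈ Ioo (0:ℝ) 1, HasDerivAt f (f' x) x)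
    (hderiv2 : ∀ x ∈ Ioo (0:ℝ) 1, HasDerivAt f' (f'' x) x)
    (hcont : ContinuousOn f'' (Ioo (0:ℝ) 1))
    (hlim : Tendsto (fun x => f'' x * x ^ 2) (nhdsWithin 0 (Ioo (0:ℝ) 1)) (nhds C)) :
    Tendsto (fun x => f x / |Real.log x|) (nhdsWithin 0 (Ioo (0:ℝ) 1)) (nhds C) := by
  rw [Metric.tendsto_nhds]
  intro ε hε
  have h := main_bound f f' f'' C hderiv1 hderiv2 hlim (show (0:ℝ) < ε / 3 by linarith)
  filter_upwards [h] with x hx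
  rw [Real.dist_eq]
  calc |f x / |Real.log x| - C| ≤ 2 * (ε / 3) := hx
    _ < ε := by linarith
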